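/- Let C_1, …, C_r be nonzero monomial ideals in ℂ[x_1,…,x_n] and for each p ≥ 1 set I_p = C_1^p ∩ … ∩ C_r^p (a graded system of monomial ideals). Then ⋃_{p≥1} (1/p)·Newt(I_p) = Newt(C_1) ∩ … ∩ Newt(C_r). -/

import Mathlib

open Ideal MvPolynomial Pointwise

namespace ELS

/-- Contraction of the localized ideal `J·R_S` under `R → R_S` (the `S`-saturation of `J`). -/
noncomputable def satIdeal {R : Type*} [CommRing R] (S : Submonoid R) (J : Ideal R) : Ideal R :=
  (J.map (algebraMap R (Localization S))).comap (algebraMap R (Localization S))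

/-- The complement of a prime ideal, as a submonoid. -/
def primeComplSub {R : Type*} [CommRing R] (P : Ideal R) (hP : P.IsPrime) : Submonoid R :=
  haveI := hP
  P.primeCompl

/-- The symbolic power of a prime ideal: contraction of `P^p R_P` under `R → R_P`. -/
noncomputable def primeSymbolicPower {R : Type*} [CommRing R] (P : Ideal R) (hP : P.IsPrime)
    (p : ℕ) : Ideal R :=
  satIdeal (primeComplSub P hP) (P ^ p)

/-- The multiplicative set of elements lying outside every minimal prime of `I`. -/
def outMinPrimes {R : Type*} [CommRing R] (I : Ideal R) : Submonoid R where
  carrier := {s | ∀ Q ∈ I.minimalPrimes, s ∉ Q}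
  one_mem' := by
    intro Q hQ h1
    exact hQ.1.1.ne_top ((Ideal.eq_top_iff_one Q).mpr h1)
  mul_mem' := by
    intro a b ha hb Q hQ hab
    rcases hQ.1.1.mem_or_mem hab with h | h
    · exact ha Q hQ h
    · exact hb Q hQ h

/-- The symbolic power of an ideal: contraction of `I^p` localized at the complement of the
union of the minimal primes of `I`. -/
noncomputable def symbolicPower {R : Type*} [CommRing R] (I : Ideal R) (p : ℕ) : Ideal R :=
  satIdeal (outMinPrimes I) (I ^ p)

/-- A monomial ideal: with every polynomial it contains all monomials in its support. -/
def IsMonomialIdeal {n : ℕ} (a : Ideal (MvPolynomial (Fin n) ℂ)) : Prop :=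
  ∀ f ∈ a, ∀ v ∈ f.support, (monomial v (1 : ℂ)) ∈ a

/-- The set of exponent vectors of monomials in `a`, viewed inside `ℝ^n`. -/
def monomSet {n : ℕ} (a : Ideal (MvPolynomial (Fin n) ℂ)) : Set (Fin n → ℝ) :=
  {x | ∃ v : Fin n →₀ ℕ, (monomial v (1 : ℂ)) ∈ a ∧ x = fun i => (v i : ℝ)}

/-- The Newton polyhedron of a monomial ideal: the convex hull in `ℝ^n` of the
exponent vectors of the monomials in `a`. -/
def newt {n : ℕ} (a : Ideal (MvPolynomial (Fin n) ℂ)) : Set (Fin n → ℝ) :=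
  convexHull ℝ (monomSet a)

/-- The least total degree of a nonzero polynomial in `J`: the multiplicity at the origin. -/
noncomputable def mult0 {n : ℕ} (J : Ideal (MvPolynomial (Fin n) ℂ)) : ℕ :=
  sInf {d | ∃ f ∈ J, f ≠ 0 ∧ f.totalDegree = d}

end ELS


namespace Stmt7Aux

open Finset

abbrev QRow (n : ℕ) := (Fin n → ℚ) × ℚ

/-- real dot product of a rational row with a real vector -/
def dotR {n : ℕ} (a : Fin n → ℚ) (x : Fin n → ℝ) : ℝ := ∑ i, (a i : ℝ) * x i

def RowSat {n : ℕ} (r : QRow n) (x : Fin n → ℝ) : Prop := dotR r.1 x ≤ (r.2 : ℝ)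

def SysSat {n : ℕ} (S : Finset (QRow n)) (x : Fin n → ℝ) : Prop := ∀ r ∈ S, RowSat r x

variable {n : ℕ}

def dropRow (r : QRow (n+1)) : QRow n := (fun i => r.1 i.castSucc, r.2)

def combRow (p m : QRow (n+1)) : QRow n :=
  (fun i => p.1 i.castSucc / p.1 (Fin.last n) - m.1 i.castSucc / m.1 (Fin.last n),
    p.2 / p.1 (Fin.last n) - m.2 / m.1 (Fin.last n))

def elim1 (S : Finset (QRow (n+1))) : Finset (QRow n) :=
  (S.filter (fun r => r.1 (Fin.last n) = 0)).image dropRow ∪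
  ((S ×ˢ S).filter (fun pm => 0 < pm.1.1 (Fin.last n) ∧ pm.2.1 (Fin.last n) < 0)).image
    (fun pm => combRow pm.1 pm.2)

lemma dot_snoc (r : QRow (n+1)) (x : Fin n → ℝ) (t : ℝ) :
    dotR r.1 (Fin.snoc x t) = dotR (fun i => r.1 i.castSucc) x + (r.1 (Fin.last n) : ℝ) * t := by
  unfold dotR
  rw [Fin.sum_univ_castSucc]
  simp

lemma div_trick {P M cp cm αp αm : ℝ} (hp : 0 < αp) (hm : αm < 0) :
    (P/αp - M/αm ≤ cp/αp - cm/αm) ↔ ((cm - M)/αm ≤ (cp - P)/αp) := by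
  have hm2 : (0:ℝ) < -αm := neg_pos.2 hm
  have hp' : αp ≠ 0 := hp.ne'
  have hm' : αm ≠ 0 := hm.ne
  have e1 : ∀ A : ℝ, A / αp * (αp * -αm) = A * -αm := by intro A; field_simp
  have e2 : ∀ A : ℝ, A / αm * (αp * -αm) = -(A * αp) := by intro A; field_simp
  have hpos : (0:ℝ) < αp * -αm := mul_pos hp hm2
  constructor <;> intro h
  · have h2 := mul_le_mul_of_nonneg_right h hpos.le
    rw [sub_mul, sub_mul, e1, e1, e2, e2] at h2
    refine le_of_mul_le_mul_right ?_ hpos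
    rw [e1, e2]
    nlinarith [h2]
  · have h2 := mul_le_mul_of_nonneg_right h hpos.le
    rw [e2, e1] at h2
    refine le_of_mul_le_mul_right ?_ hpos
    rw [sub_mul, sub_mul, e1, e1, e2, e2]
    nlinarith [h2]

lemma comb_sat_iff (p m : QRow (n+1)) (x : Fin n → ℝ)
    (hp : 0 < p.1 (Fin.last n)) (hm : m.1 (Fin.last n) < 0) :
    RowSat (combRow p m) x ↔
      (((m.2 : ℝ) - dotR (fun i => m.1 i.castSucc) x) / (m.1 (Fin.last n) : ℝ) ≤
      ((p.2 : ℝ) - dotR (fun i => p.1 i.castSucc) x) / (p.1 (Fin.last n) : ℝ)) := by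
  have hpR : (0:ℝ) < (p.1 (Fin.last n) : ℝ) := by exact_mod_cast hp
  have hmR : ((m.1 (Fin.last n) : ℝ)) < 0 := by exact_mod_cast hm
  have hsum : dotR (combRow p m).1 x
      = dotR (fun i => p.1 i.castSucc) x / (p.1 (Fin.last n) : ℝ)
      - dotR (fun i => m.1 i.castSucc) x / (m.1 (Fin.last n) : ℝ) := by
    unfold dotR combRow
    rw [Finset.sum_div, Finset.sum_div, ← Finset.sum_sub_distrib]
    refine Finset.sum_congr rfl fun i _ => ?_
    push_cast
    field_simp
  unfold RowSat
  rw [hsum]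
  have hc : ((combRow p m).2 : ℝ)
      = (p.2 : ℝ) / (p.1 (Fin.last n) : ℝ) - (m.2 : ℝ) / (m.1 (Fin.last n) : ℝ) := by
    unfold combRow; push_cast; ring
  rw [hc]
  exact div_trick hpR hmR

lemma exists_between {ι κ : Type*} (A : Finset ι) (B : Finset κ) (f : ι → ℝ) (g : κ → ℝ)
    (h : ∀ a ∈ A, ∀ b ∈ B, f a ≤ g b) :
    ∃ t : ℝ, (∀ a ∈ A, f a ≤ t) ∧ (∀ b ∈ B, t ≤ g b) := by
  rcases B.eq_empty_or_nonempty with hB | hB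
  · subst hB
    rcases A.eq_empty_or_nonempty with hA | hA
    · exact ⟨0, by simp [hA]⟩
    · exact ⟨A.sup' hA f, fun a ha => Finset.le_sup' f ha, by simp⟩
  · refine ⟨B.inf' hB g, fun a ha => Finset.le_inf' hB g fun b hb => h a ha b hb,
      fun b hb => Finset.inf'_le g hb⟩

theorem elim1_sat (S : Finset (QRow (n+1))) (x : Fin n → ℝ) :
    SysSat (elim1 S) x ↔ ∃ t : ℝ, SysSat S (Fin.snoc x t) := by
  constructor
  · intro hS
    obtain ⟨t, ht1, ht2⟩ := exists_between
      (S.filter (fun r => r.1 (Fin.last n) < 0))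
      (S.filter (fun r => 0 < r.1 (Fin.last n)))
      (fun r => ((r.2 : ℝ) - dotR (fun i => r.1 i.castSucc) x) / (r.1 (Fin.last n) : ℝ))
      (fun r => ((r.2 : ℝ) - dotR (fun i => r.1 i.castSucc) x) / (r.1 (Fin.last n) : ℝ))
      (by
        intro a ha b hb
        rw [Finset.mem_filter] at ha hb
        have hmem : combRow b a ∈ elim1 S := by
          apply Finset.mem_union_right
          apply Finset.mem_image.2
          exact ⟨(b, a), Finset.mem_filter.2 ⟨Finset.mem_product.2 ⟨hb.1, ha.1⟩, hb.2, ha.2⟩, rfl⟩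
        exact (comb_sat_iff b a x hb.2 ha.2).1 (hS _ hmem))
    refine ⟨t, fun r hr => ?_⟩
    unfold RowSat
    rw [dot_snoc]
    rcases lt_trichotomy (r.1 (Fin.last n)) 0 with hneg | hzero | hpos
    · have h1 := ht1 r (Finset.mem_filter.2 ⟨hr, hneg⟩)
      have hmR : ((r.1 (Fin.last n) : ℝ)) < 0 := by exact_mod_cast hneg
      rw [div_le_iff_of_neg hmR] at h1
      linarith [h1]
    · have hmem : dropRow r ∈ elim1 S := by
        apply Finset.mem_union_left
        exact Finset.mem_image.2 ⟨r, Finset.mem_filter.2 ⟨hr, hzero⟩, rfl⟩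
      have := hS _ hmem
      unfold RowSat dropRow at this
      rw [hzero]
      push_cast
      simpa using this
    · have h1 := ht2 r (Finset.mem_filter.2 ⟨hr, hpos⟩)
      have hpR : (0:ℝ) < (r.1 (Fin.last n) : ℝ) := by exact_mod_cast hpos
      rw [le_div_iff₀ hpR] at h1
      linarith [h1]
  · rintro ⟨t, ht⟩ r hr
    unfold elim1 at hr
    rw [Finset.mem_union] at hr
    rcases hr with hr | hr
    · obtain ⟨r', hr', rfl⟩ := Finset.mem_image.1 hr
      rw [Finset.mem_filter] at hr'
      have := ht r' hr'.1
      unfold RowSat at this ⊢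
      rw [dot_snoc] at this
      rw [hr'.2] at this
      unfold dropRow
      simpa using this
    · obtain ⟨⟨p, m⟩, hpm, rfl⟩ := Finset.mem_image.1 hr
      rw [Finset.mem_filter, Finset.mem_product] at hpm
      obtain ⟨⟨hpS, hmS⟩, hpc, hmc⟩ := hpm
      rw [comb_sat_iff p m x hpc hmc]
      have h1 := ht p hpS
      have h2 := ht m hmS
      unfold RowSat at h1 h2
      rw [dot_snoc] at h1 h2
      have hpR : (0:ℝ) < (p.1 (Fin.last n) : ℝ) := by exact_mod_cast hpc
      have hmR : ((m.1 (Fin.last n) : ℝ)) < 0 := by exact_mod_cast hmc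
      have hup : t ≤ ((p.2:ℝ) - dotR (fun i => p.1 i.castSucc) x) / (p.1 (Fin.last n) : ℝ) := by
        rw [le_div_iff₀ hpR]; linarith
      have hlo : ((m.2:ℝ) - dotR (fun i => m.1 i.castSucc) x) / (m.1 (Fin.last n) : ℝ) ≤ t := by
        rw [div_le_iff_of_neg hmR]; linarith
      linarith


theorem elim_all {n : ℕ} (d : ℕ) (S : Finset (QRow (n + d))) :
    ∃ S' : Finset (QRow n), ∀ x : Fin n → ℝ,
      SysSat S' x ↔ ∃ w : Fin d → ℝ, SysSat S (Fin.append x w) := by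
  induction d with
  | zero =>
    refine ⟨S, fun x => ?_⟩
    have e : ∀ w : Fin 0 → ℝ, Fin.append x w = x := by
      intro w
      rw [Subsingleton.elim w Fin.elim0, Fin.append_elim0]
      exact funext fun i => rfl
    constructor
    · intro h; exact ⟨Fin.elim0, by rw [e]; exact h⟩
    · rintro ⟨w, hw⟩; rwa [e w] at hw
  | succ d ih =>
    obtain ⟨S', hS'⟩ := ih (elim1 S)
    refine ⟨S', fun x => ?_⟩
    rw [hS' x]
    constructor
    · rintro ⟨w, hw⟩
      rw [elim1_sat] at hw
      obtain ⟨t, ht⟩ := hw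
      refine ⟨Fin.snoc w t, ?_⟩
      rwa [Fin.append_snoc]
    · rintro ⟨w, hw⟩
      refine ⟨Fin.init w, ?_⟩
      rw [elim1_sat]
      exact ⟨w (Fin.last d), by rw [← Fin.append_snoc, Fin.snoc_init_self]; exact hw⟩

/-! ### affine insertion maps -/

def IsRatVec {k : ℕ} (y : Fin k → ℝ) : Prop := ∀ i, ∃ q : ℚ, y i = (q : ℝ)

variable {n : ℕ}

noncomputable def insLin (i0 : Fin (n+1)) (u : Fin n → ℝ) : (Fin n → ℝ) →ₗ[ℝ] (Fin (n+1) → ℝ) where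
  toFun z := i0.insertNth (∑ j, u j * z j) z
  map_add' z z' := by
    funext i
    refine Fin.succAboveCases i0 ?_ ?_ i
    · simp [mul_add, Finset.sum_add_distrib]
    · intro j; simp
  map_smul' c z := by
    funext i
    refine Fin.succAboveCases i0 ?_ ?_ i
    · simp [Finset.mul_sum, mul_left_comm]
    · intro j; simp

noncomputable def insAff (i0 : Fin (n+1)) (u : Fin n → ℝ) (κ : ℝ) : (Fin n → ℝ) →ᵃ[ℝ] (Fin (n+1) → ℝ) :=
  AffineMap.mk' (fun z => i0.insertNth (κ + ∑ j, u j * z j) z) (insLin i0 u)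
    0 (by
      intro z
      funext i
      refine Fin.succAboveCases i0 ?_ ?_ i
      · simp [insLin]; ring
      · intro j; simp [insLin, Pi.single_eq_of_ne (Fin.succAbove_ne i0 j)])

lemma insAff_apply (i0 : Fin (n+1)) (u : Fin n → ℝ) (κ : ℝ) (z : Fin n → ℝ) :
    insAff i0 u κ z = i0.insertNth (κ + ∑ j, u j * z j) z := by
  simp [insAff]

lemma dot_insertNth (f : Fin (n+1) → ℚ) (i0 : Fin (n+1)) (v : ℝ) (z : Fin n → ℝ) :
    dotR f (i0.insertNth v z) = (f i0 : ℝ) * v + ∑ j, (f (i0.succAbove j) : ℝ) * z j := by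
  unfold dotR
  rw [Fin.sum_univ_succAbove _ i0]
  simp

/-! ### the cube lemma -/

theorem cube : ∀ (n : ℕ) (x : Fin n → ℝ) (δ : ℝ), 0 < δ →
    x ∈ convexHull ℝ {y : Fin n → ℝ | IsRatVec y ∧ ∀ i, |y i - x i| ≤ δ} := by
  intro n
  induction n with
  | zero =>
    intro x δ hδ
    exact subset_convexHull ℝ _ ⟨fun i => i.elim0, fun i => i.elim0⟩
  | succ n ih =>
    intro x δ hδ
    obtain ⟨q1, hq1a, hq1b⟩ := exists_rat_btwn (show x 0 - δ < x 0 by linarith)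
    obtain ⟨q2, hq2a, hq2b⟩ := exists_rat_btwn (show x 0 < x 0 + δ by linarith)
    have hlt : (q1 : ℝ) < q2 := lt_trans hq1b hq2a
    set t : ℝ := ((q2 : ℝ) - x 0) / ((q2 : ℝ) - q1) with ht
    have ht0 : 0 ≤ t := div_nonneg (by linarith) (by linarith)
    have ht1 : 0 ≤ 1 - t := by
      have : t ≤ 1 := by
        rw [div_le_one (by linarith)]
        linarith
      linarith
    have hne : (q2 : ℝ) - q1 ≠ 0 := by linarith
    have hcomb : t * q1 + (1 - t) * q2 = x 0 := by
      have h2 : t * ((q1:ℝ) - q2) = x 0 - q2 := by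
        rw [ht, div_mul_eq_mul_div, div_eq_iff hne]
        ring
      linarith [h2]
    set x' : Fin n → ℝ := fun j => x j.succ with hx'
    have hIH := ih x' δ hδ
    set T' : Set (Fin n → ℝ) := {y | IsRatVec y ∧ ∀ i, |y i - x' i| ≤ δ} with hT'
    set T : Set (Fin (n+1) → ℝ) := {y | IsRatVec y ∧ ∀ i, |y i - x i| ≤ δ} with hT
    have key : ∀ q : ℚ, |(q : ℝ) - x 0| ≤ δ →
        insAff (0 : Fin (n+1)) 0 (q : ℝ) x' ∈ convexHull ℝ T := by
      intro q hq
      have h1 : insAff (0 : Fin (n+1)) 0 (q : ℝ) x'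
          ∈ (insAff (0 : Fin (n+1)) 0 (q : ℝ)) '' (convexHull ℝ T') :=
        Set.mem_image_of_mem _ hIH
      rw [AffineMap.image_convexHull] at h1
      refine convexHull_mono ?_ h1
      rintro _ ⟨z, hz, rfl⟩
      rw [insAff_apply]
      constructor
      · intro i
        refine Fin.succAboveCases (0 : Fin (n+1)) ?_ ?_ i
        · refine ⟨q, ?_⟩
          simp
        · intro j
          obtain ⟨qj, hqj⟩ := hz.1 j
          exact ⟨qj, by simpa using hqj⟩
      · intro i
        refine Fin.succAboveCases (0 : Fin (n+1)) ?_ ?_ i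
        · simpa using hq
        · intro j
          have := hz.2 j
          simpa [hx'] using this
    have m1 : insAff (0 : Fin (n+1)) 0 (q1 : ℝ) x' ∈ convexHull ℝ T :=
      key q1 (by rw [abs_le]; constructor <;> linarith)
    have m2 : insAff (0 : Fin (n+1)) 0 (q2 : ℝ) x' ∈ convexHull ℝ T :=
      key q2 (by rw [abs_le]; constructor <;> linarith)
    have hx : x = t • (insAff (0 : Fin (n+1)) 0 (q1 : ℝ) x')
        + (1 - t) • (insAff (0 : Fin (n+1)) 0 (q2 : ℝ) x') := by
      funext i
      refine Fin.succAboveCases (0 : Fin (n+1)) ?_ ?_ i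
      · simp [insAff_apply]
        linarith [hcomb]
      · intro j
        simp [insAff_apply]
        ring
    rw [hx]
    exact (convex_convexHull ℝ T) m1 m2 ht0 ht1 (by ring)


/-- transformed row after substituting variable `i0` using the tight row `(a, c)` -/
def tRow (i0 : Fin (n+1)) (a : Fin (n+1) → ℚ) (c : ℚ) (s : QRow (n+1)) : QRow n :=
  (fun j => s.1 (i0.succAbove j) - s.1 i0 * a (i0.succAbove j) / a i0,
    s.2 - s.1 i0 * c / a i0)

theorem ratpoly : ∀ (n : ℕ) (S : Finset (QRow n)) (x : Fin n → ℝ), SysSat S x →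
    x ∈ convexHull ℝ {y : Fin n → ℝ | IsRatVec y ∧ SysSat S y} := by
  intro n
  induction n with
  | zero =>
    intro S x hx
    exact subset_convexHull ℝ _ ⟨fun i => i.elim0, hx⟩
  | succ n ih =>
    intro S x hx
    by_cases hT : ∃ r ∈ S, (∃ i, r.1 i ≠ 0) ∧ dotR r.1 x = (r.2 : ℝ)
    · -- a tight row with a nonzero coefficient: substitute it away
      obtain ⟨r, hrS, ⟨i0, hi0⟩, htight⟩ := hT
      set a : Fin (n+1) → ℚ := r.1 with ha
      set c : ℚ := r.2 with hc
      have hai0R : ((a i0 : ℝ)) ≠ 0 := by exact_mod_cast hi0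
      set u : Fin n → ℝ := fun j => -((a (i0.succAbove j) : ℝ)) / (a i0 : ℝ) with hu
      set κ : ℝ := (c : ℝ) / (a i0 : ℝ) with hκ
      set φ := insAff i0 u κ with hφ
      -- the key identity for rows
      have T1 : ∀ (s : QRow (n+1)) (z : Fin n → ℝ),
          dotR s.1 (φ z) = dotR (tRow i0 a c s).1 z + (s.1 i0 : ℝ) * (c : ℝ) / (a i0 : ℝ) := by
        intro s z
        have hterm : ∀ j : Fin n, (s.1 (i0.succAbove j) : ℝ) * z j + (s.1 i0 : ℝ) * (u j * z j)
            = ((s.1 (i0.succAbove j) : ℝ) - (s.1 i0 : ℝ) * (a (i0.succAbove j) : ℝ) / (a i0 : ℝ)) * z j := by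
          intro j
          rw [hu]
          field_simp
          ring
        have hsum : (∑ j, (s.1 (i0.succAbove j) : ℝ) * z j) + (∑ j, (s.1 i0 : ℝ) * (u j * z j))
            = ∑ j, ((s.1 (i0.succAbove j) : ℝ) - (s.1 i0 : ℝ) * (a (i0.succAbove j) : ℝ) / (a i0 : ℝ)) * z j := by
          rw [← Finset.sum_add_distrib]
          exact Finset.sum_congr rfl fun j _ => hterm j
        have hK : (s.1 i0 : ℝ) * κ = (s.1 i0 : ℝ) * (c:ℝ) / (a i0 : ℝ) := by rw [hκ]; ring
        rw [hφ, insAff_apply, dot_insertNth]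
        unfold dotR tRow
        push_cast
        rw [mul_add, Finset.mul_sum, hK]
        linarith [hsum]
      have Tsat : ∀ (s : QRow (n+1)) (z : Fin n → ℝ),
          (RowSat s (φ z) ↔ RowSat (tRow i0 a c s) z) := by
        intro s z
        unfold RowSat
        rw [T1]
        unfold tRow
        push_cast
        constructor <;> intro h <;> linarith
      -- φ maps the restricted x back to x
      have P3 : φ (fun j => x (i0.succAbove j)) = x := by
        funext i
        refine Fin.succAboveCases i0 ?_ ?_ i
        · rw [hφ, insAff_apply, Fin.insertNth_apply_same, hκ, hu]
          have hexp : (c:ℝ) = (a i0 : ℝ) * x i0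
              + ∑ j, (a (i0.succAbove j) : ℝ) * x (i0.succAbove j) := by
            rw [← htight]
            unfold dotR
            rw [Fin.sum_univ_succAbove _ i0]
          refine mul_right_cancel₀ hai0R ?_
          rw [add_mul, div_mul_cancel₀ _ hai0R, Finset.sum_mul]
          have hsum : ∑ j, (-(a (i0.succAbove j):ℝ) / (a i0:ℝ)) * x (i0.succAbove j) * (a i0:ℝ)
              = -(∑ j, (a (i0.succAbove j) : ℝ) * x (i0.succAbove j)) := by
            rw [← Finset.sum_neg_distrib]
            refine Finset.sum_congr rfl fun j _ => ?_
            field_simp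
          rw [hsum]
          linarith [hexp]
        · intro j
          rw [hφ, insAff_apply, Fin.insertNth_apply_succAbove]
      classical
      set Stil := S.image (tRow i0 a c) with hStil
      have hsat : SysSat Stil (fun j => x (i0.succAbove j)) := by
        intro s' hs'
        obtain ⟨s, hsS, rfl⟩ := Finset.mem_image.1 hs'
        rw [← Tsat s _, P3]
        exact hx s hsS
      have hmem := ih Stil (fun j => x (i0.succAbove j)) hsat
      have himg : x ∈ φ '' (convexHull ℝ {z | IsRatVec z ∧ SysSat Stil z}) := ⟨_, hmem, P3⟩
      rw [AffineMap.image_convexHull] at himg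
      refine convexHull_mono ?_ himg
      rintro _ ⟨z, ⟨hz1, hz2⟩, rfl⟩
      constructor
      · intro i
        refine Fin.succAboveCases i0 ?_ ?_ i
        · choose qz hqz using hz1
          refine ⟨c / a i0 + ∑ j, (-(a (i0.succAbove j)) / a i0) * qz j, ?_⟩
          rw [hφ, insAff_apply, Fin.insertNth_apply_same, hκ, hu]
          simp only [hqz]
          push_cast
          congr 1
        · intro j
          rw [hφ, insAff_apply, Fin.insertNth_apply_succAbove]
          exact hz1 j
      · intro s hsS
        rw [Tsat s z]
        exact hz2 _ (Finset.mem_image_of_mem _ hsS)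
    · -- all rows with a nonzero coefficient are strict at x
      push_neg at hT
      classical
      set S' := S.filter (fun r : QRow (n+1) => ¬ (∀ i, r.1 i = 0)) with hS'
      have hstrict : ∀ r ∈ S', dotR r.1 x < (r.2 : ℝ) := by
        intro r hr
        rw [hS', Finset.mem_filter] at hr
        obtain ⟨hrS, hrnz⟩ := hr
        push_neg at hrnz
        obtain ⟨i, hi⟩ := hrnz
        exact lt_of_le_of_ne (hx r hrS) (hT r hrS ⟨i, hi⟩)
      have hex : ∃ δ : ℝ, 0 < δ ∧ ∀ r ∈ S', dotR r.1 x + (∑ i, |(r.1 i : ℝ)|) * δ ≤ (r.2 : ℝ) := by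
        rcases S'.eq_empty_or_nonempty with hE | hNE
        · exact ⟨1, one_pos, by rw [hE]; simp⟩
        · set ε := S'.inf' hNE (fun r => ((r.2 : ℝ) - dotR r.1 x) / ((∑ i, |(r.1 i : ℝ)|) + 1)) with hε
          have hεpos : 0 < ε := by
            rw [hε]
            refine (Finset.lt_inf'_iff hNE).2 fun r hr => ?_
            refine div_pos (by linarith [hstrict r hr]) ?_
            have h2 : (0:ℝ) ≤ ∑ i, |(r.1 i : ℝ)| := Finset.sum_nonneg fun i _ => abs_nonneg _
            linarith
          refine ⟨ε, hεpos, fun r hr => ?_⟩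
          have h1 : ε ≤ ((r.2 : ℝ) - dotR r.1 x) / ((∑ i, |(r.1 i : ℝ)|) + 1) :=
            Finset.inf'_le _ hr
          have h2 : (0:ℝ) ≤ ∑ i, |(r.1 i : ℝ)| := Finset.sum_nonneg fun i _ => abs_nonneg _
          rw [le_div_iff₀ (by linarith)] at h1
          nlinarith [h1, hεpos]
      obtain ⟨δ, hδpos, hδ⟩ := hex
      have hc := cube (n+1) x δ hδpos
      refine convexHull_mono ?_ hc
      rintro y ⟨hy1, hy2⟩
      refine ⟨hy1, fun r hr => ?_⟩
      by_cases hz : ∀ i, r.1 i = 0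
      · have hzero : ∀ w : Fin (n+1) → ℝ, dotR r.1 w = 0 := by
          intro w
          unfold dotR
          refine Finset.sum_eq_zero fun i _ => ?_
          rw [hz i]
          norm_num
        have h0 := hx r hr
        unfold RowSat at h0 ⊢
        rw [hzero x] at h0
        rw [hzero y]
        exact h0
      · have hrS' : r ∈ S' := Finset.mem_filter.2 ⟨hr, hz⟩
        have hbd : dotR r.1 y ≤ dotR r.1 x + (∑ i, |(r.1 i : ℝ)|) * δ := by
          have : dotR r.1 y - dotR r.1 x = ∑ i, (r.1 i : ℝ) * (y i - x i) := by
            unfold dotR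
            rw [← Finset.sum_sub_distrib]
            exact Finset.sum_congr rfl fun i _ => by ring
          have hb : ∑ i, (r.1 i : ℝ) * (y i - x i) ≤ ∑ i, |(r.1 i : ℝ)| * δ := by
            refine Finset.sum_le_sum fun i _ => ?_
            calc (r.1 i : ℝ) * (y i - x i) ≤ |(r.1 i : ℝ) * (y i - x i)| := le_abs_self _
              _ = |(r.1 i : ℝ)| * |y i - x i| := abs_mul _ _
              _ ≤ |(r.1 i : ℝ)| * δ := mul_le_mul_of_nonneg_left (hy2 i) (abs_nonneg _)
          rw [← Finset.sum_mul] at hb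
          linarith [this, hb]
        exact le_trans hbd (hδ r hrS')


abbrev MvP (n : ℕ) := MvPolynomial (Fin n) ℂ

variable {n : ℕ}

lemma monomial_mem_of_add (a : Ideal (MvP n)) (v w : Fin n →₀ ℕ)
    (h : monomial v (1:ℂ) ∈ a) : monomial (w + v) (1:ℂ) ∈ a := by
  have e : monomial (w + v) (1:ℂ) = monomial w (1:ℂ) * monomial v (1:ℂ) := by
    rw [monomial_mul, one_mul]
  rw [e]
  exact Ideal.mul_mem_left _ _ h

lemma monomial_finsum (m : ℕ) (v : Fin m → (Fin n →₀ ℕ)) :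
    monomial (∑ k, v k) (1:ℂ) = ∏ k, monomial (v k) (1:ℂ) := by
  induction m with
  | zero => simp
  | succ m ih =>
    rw [Fin.sum_univ_castSucc, Fin.prod_univ_castSucc, ← ih, monomial_mul, one_mul]

lemma prod_mem_pow_sum (a : Ideal (MvP n)) (m : ℕ) (f : Fin m → MvP n) (e : Fin m → ℕ)
    (h : ∀ k, f k ∈ a ^ (e k)) : ∏ k, f k ∈ a ^ (∑ k, e k) := by
  induction m with
  | zero => simp [Submodule.mem_top]
  | succ m ih =>
    rw [Fin.prod_univ_castSucc, Fin.sum_univ_castSucc, pow_add]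
    exact Ideal.mul_mem_mul (ih _ _ fun k => h _) (h _)

lemma comb_monomial_mem (a : Ideal (MvP n)) (m : ℕ) (g : Fin m → (Fin n →₀ ℕ)) (e : Fin m → ℕ)
    (hg : ∀ k, monomial (g k) (1:ℂ) ∈ a) (w : Fin n →₀ ℕ) :
    monomial (w + ∑ k, e k • g k) (1:ℂ) ∈ a ^ (∑ k, e k) := by
  apply monomial_mem_of_add
  rw [monomial_finsum]
  refine prod_mem_pow_sum a m _ e fun k => ?_
  have : monomial (e k • g k) (1:ℂ) = (monomial (g k) (1:ℂ)) ^ (e k) := by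
    rw [monomial_pow, one_pow]
  rw [this]
  exact Ideal.pow_mem_pow (hg k) _

/-- a monomial of an element of `a ^ p` is a sum of `p` monomials of `a`. -/
lemma support_pow_sum (a : Ideal (MvP n))
    (ha : ∀ f ∈ a, ∀ v ∈ f.support, (monomial v (1 : ℂ)) ∈ a)
    (p : ℕ) (hp : 1 ≤ p) :
    ∀ f ∈ a ^ p, ∀ v ∈ f.support,
      ∃ u : Fin p → (Fin n →₀ ℕ), (∀ j, monomial (u j) (1:ℂ) ∈ a) ∧ v = ∑ j, u j := by
  induction p, hp using Nat.le_induction with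
  | base =>
    intro f hf v hv
    rw [pow_one] at hf
    exact ⟨fun _ => v, fun _ => ha f hf v hv, by rw [Fin.sum_univ_one]⟩
  | succ p hp ih =>
    intro f hf
    rw [pow_succ] at hf
    refine Submodule.mul_induction_on hf ?_ ?_
    · intro g hg q hq v hv
      classical
      have hsub := MvPolynomial.support_mul g q
      obtain ⟨v1, hv1, v2, hv2, hv12⟩ := Finset.mem_add.1 (hsub hv)
      obtain ⟨u', hu', hsum⟩ := ih g hg v1 hv1
      refine ⟨Fin.snoc u' v2, ?_, ?_⟩
      · intro j
        refine Fin.lastCases ?_ ?_ j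
        · rw [Fin.snoc_last]
          exact ha q hq v2 hv2
        · intro j'
          rw [Fin.snoc_castSucc]
          exact hu' j'
      · rw [Fin.sum_univ_castSucc]
        simp only [Fin.snoc_castSucc, Fin.snoc_last]
        rw [← hsum, hv12]
    · intro g q ihg ihq v hv
      rcases Finset.mem_union.1 (MvPolynomial.support_add hv) with h | h
      · exact ihg v h
      · exact ihq v h

/-- finite set of monomial generators dominating every monomial of `a`. -/
lemma exists_gens (a : Ideal (MvP n))
    (ha : ∀ f ∈ a, ∀ v ∈ f.support, (monomial v (1 : ℂ)) ∈ a) :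
    ∃ (m : ℕ) (g : Fin m → (Fin n →₀ ℕ)),
      (∀ k, monomial (g k) (1:ℂ) ∈ a) ∧
      (∀ v : Fin n →₀ ℕ, monomial v (1:ℂ) ∈ a → ∃ k, g k ≤ v) := by
  classical
  obtain ⟨F, hF⟩ := IsNoetherian.noetherian a
  set G : Finset (Fin n →₀ ℕ) := F.biUnion (fun f => f.support) with hG
  refine ⟨G.card, fun k => (G.equivFin.symm k : _), ?_, ?_⟩
  · intro k
    have hmem : ((G.equivFin.symm k : _) : Fin n →₀ ℕ) ∈ F.biUnion (fun f => f.support) :=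
      (G.equivFin.symm k).2
    obtain ⟨f, hfF, hfs⟩ := Finset.mem_biUnion.1 hmem
    have hfa : f ∈ a := by
      rw [← hF]
      exact Ideal.subset_span hfF
    exact ha f hfa _ hfs
  · intro v hv
    rw [← hF] at hv
    obtain ⟨coef, -, hcoef⟩ := Submodule.mem_span_finset.1 hv
    have hvs : v ∈ (monomial v (1:ℂ)).support := by
      rw [MvPolynomial.support_monomial]
      simp
    rw [← hcoef] at hvs
    have hvs2 := MvPolynomial.support_sum hvs
    rw [Finset.mem_biUnion] at hvs2
    obtain ⟨f, hfF, hfs⟩ := hvs2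
    have := MvPolynomial.support_mul (coef f) f (by simpa [smul_eq_mul] using hfs)
    obtain ⟨w, _, gx, hgx, hwg⟩ := Finset.mem_add.1 this
    have hgxG : gx ∈ G := Finset.mem_biUnion.2 ⟨f, hfF, hgx⟩
    refine ⟨G.equivFin ⟨gx, hgxG⟩, ?_⟩
    simp only [Equiv.symm_apply_apply]
    rw [← hwg]
    exact le_add_self


/-- the real exponent vector of a `Finsupp`. -/
def toR {n : ℕ} (v : Fin n →₀ ℕ) : Fin n → ℝ := fun i => (v i : ℝ)

lemma toR_mem_monomSet {a : Ideal (MvP n)} {v : Fin n →₀ ℕ} (h : monomial v (1:ℂ) ∈ a) :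
    toR v ∈ ELS.monomSet a := ⟨v, h, rfl⟩

lemma newt_add_single (a : Ideal (MvP n)) (x : Fin n → ℝ) (hx : x ∈ ELS.newt a)
    (i : Fin n) (c : ℝ) (hc : 0 ≤ c) : x + c • (Pi.single i 1 : Fin n → ℝ) ∈ ELS.newt a := by
  rw [ELS.newt, mem_convexHull_iff_exists_fintype] at hx
  obtain ⟨ι, hι, w, z, hw0, hw1, hz, hsum⟩ := hx
  obtain ⟨N0, hN0⟩ := exists_nat_ge c
  set N : ℕ := N0 + 1 with hN
  have hcN : c ≤ (N : ℝ) := by rw [hN]; push_cast; linarith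
  have hNpos : (0:ℝ) < N := by positivity
  have hmem : ∀ k : ι, z k + c • (Pi.single i 1 : Fin n → ℝ) ∈ ELS.newt a := by
    intro k
    obtain ⟨v, hva, hvb⟩ := hz k
    have hend : z k + (N:ℝ) • (Pi.single i 1 : Fin n → ℝ) ∈ ELS.monomSet a := by
      refine ⟨Finsupp.single i N + v, monomial_mem_of_add a v _ hva, ?_⟩
      funext j
      rw [hvb]
      simp only [Pi.add_apply, Pi.smul_apply, Finsupp.add_apply, Finsupp.single_apply,
        Pi.single_apply, smul_eq_mul]
      by_cases hij : i = j
      · subst hij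
        simp only [if_pos rfl]
        push_cast
        ring
      · simp only [if_neg hij, if_neg (Ne.symm hij)]
        push_cast
        ring
    have hseg : z k + c • (Pi.single i 1 : Fin n → ℝ)
        = (1 - c / N) • (z k) + (c / N) • (z k + (N:ℝ) • (Pi.single i 1 : Fin n → ℝ)) := by
      funext j
      simp only [Pi.add_apply, Pi.smul_apply, smul_eq_mul]
      field_simp
      ring
    rw [hseg]
    refine (convex_convexHull ℝ _) ?_ ?_ ?_ ?_ (by ring)
    · exact subset_convexHull ℝ _ ⟨v, hva, hvb⟩
    · exact subset_convexHull ℝ _ hend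
    · have : c / N ≤ 1 := by rw [div_le_one hNpos]; exact hcN
      linarith
    · positivity
  have hxc : x + c • (Pi.single i 1 : Fin n → ℝ) = ∑ k, w k • (z k + c • (Pi.single i 1 : Fin n → ℝ)) := by
    rw [← hsum]
    rw [Finset.sum_congr rfl fun k _ => smul_add (w k) (z k) (c • (Pi.single i 1 : Fin n → ℝ))]
    rw [Finset.sum_add_distrib, ← Finset.sum_smul, hw1, one_smul]
  rw [hxc]
  exact (convex_convexHull ℝ _).sum_mem (fun k _ => hw0 k) (by rw [hw1]) fun k _ => hmem k

lemma newt_add_nonneg (a : Ideal (MvP n)) (x s : Fin n → ℝ) (hx : x ∈ ELS.newt a)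
    (hs : ∀ i, 0 ≤ s i) : x + s ∈ ELS.newt a := by
  have key : ∀ t : Finset (Fin n), x + ∑ i ∈ t, s i • (Pi.single i 1 : Fin n → ℝ) ∈ ELS.newt a := by
    intro t
    classical
    induction t using Finset.induction with
    | empty => simpa using hx
    | insert _ _ hni ih =>
      rename_i i t
      rw [Finset.sum_insert hni, add_comm (s i • (Pi.single i 1 : Fin n → ℝ)), ← add_assoc]
      exact newt_add_single a _ ih i (s i) (hs i)
  have hrepr : s = ∑ i, s i • (Pi.single i 1 : Fin n → ℝ) := by
    funext j
    rw [Finset.sum_apply]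
    simp [Pi.single_apply]
  rw [hrepr]
  exact key Finset.univ

lemma newt_mono {a b : Ideal (MvP n)} (h : a ≤ b) : ELS.newt a ⊆ ELS.newt b := by
  apply convexHull_mono
  rintro y ⟨v, hv, rfl⟩
  exact ⟨v, h hv, rfl⟩

lemma newt_pow_subset (a : Ideal (MvP n))
    (ha : ∀ f ∈ a, ∀ v ∈ f.support, (monomial v (1 : ℂ)) ∈ a)
    (p : ℕ) (hp : 1 ≤ p) : ELS.newt (a ^ p) ⊆ (p : ℝ) • ELS.newt a := by
  have hps : (0:ℝ) < p := by exact_mod_cast hp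
  have hsub : ELS.monomSet (a ^ p) ⊆ (p : ℝ) • ELS.newt a := by
    rintro y ⟨v, hv, rfl⟩
    have hvs : v ∈ (monomial v (1:ℂ)).support := by
      rw [MvPolynomial.support_monomial]
      simp
    obtain ⟨u, hu, husum⟩ := support_pow_sum a ha p hp _ hv v hvs
    refine ⟨(p:ℝ)⁻¹ • (fun i => (v i : ℝ)), ?_, ?_⟩
    · have : (p:ℝ)⁻¹ • (fun i => (v i : ℝ)) = ∑ j, (p:ℝ)⁻¹ • toR (u j) := by
        funext i
        rw [Finset.sum_apply]
        simp only [Pi.smul_apply, smul_eq_mul, toR]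
        simp only [husum, Finsupp.coe_finset_sum, Finset.sum_apply, Nat.cast_sum,
          Finset.mul_sum]
      rw [this]
      refine (convex_convexHull ℝ _).sum_mem (fun j _ => by positivity) ?_
        (fun j _ => subset_convexHull ℝ _ (toR_mem_monomSet (hu j)))
      rw [Finset.sum_const, Finset.card_univ, Fintype.card_fin, nsmul_eq_mul]
      field_simp
    · show (p:ℝ) • ((p:ℝ)⁻¹ • (fun i => (v i : ℝ))) = fun i => (v i : ℝ)
      rw [smul_smul, mul_inv_cancel₀ hps.ne', one_smul]
  calc ELS.newt (a ^ p) = convexHull ℝ (ELS.monomSet (a ^ p)) := rfl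
    _ ⊆ convexHull ℝ ((p : ℝ) • ELS.newt a) := convexHull_mono hsub
    _ = (p : ℝ) • convexHull ℝ (ELS.newt a) := by rw [convexHull_smul]
    _ = (p : ℝ) • ELS.newt a := by
      rw [show ELS.newt a = convexHull ℝ (ELS.monomSet a) from rfl,
        (convex_convexHull ℝ (ELS.monomSet a)).convexHull_eq]

/-- membership in the Newton polyhedron from a weighted representation. -/
lemma mem_newt_of_comb (a : Ideal (MvP n)) (m : ℕ) (g : Fin m → (Fin n →₀ ℕ))
    (hg : ∀ k, monomial (g k) (1:ℂ) ∈ a) (t : Fin m → ℝ) (s : Fin n → ℝ)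
    (ht0 : ∀ k, 0 ≤ t k) (ht1 : ∑ k, t k = 1) (hs : ∀ j, 0 ≤ s j)
    (x : Fin n → ℝ) (hx : ∀ j, ∑ k, (g k j : ℝ) * t k + s j = x j) :
    x ∈ ELS.newt a := by
  have h1 : ∑ k, t k • toR (g k) ∈ ELS.newt a :=
    (convex_convexHull ℝ _).sum_mem (fun k _ => ht0 k) ht1
      (fun k _ => subset_convexHull ℝ _ (toR_mem_monomSet (hg k)))
  have h2 := newt_add_nonneg a _ s h1 hs
  have h3 : (∑ k, t k • toR (g k)) + s = x := by
    funext j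
    rw [Pi.add_apply, Finset.sum_apply, ← hx j]
    congr 1
    exact Finset.sum_congr rfl fun k _ => by simp [toR]; ring
  rwa [h3] at h2

/-- extraction of a weighted representation from Newton-polyhedron membership. -/
lemma exists_ts (a : Ideal (MvP n)) (m : ℕ) (g : Fin m → (Fin n →₀ ℕ))
    (hdom : ∀ v : Fin n →₀ ℕ, monomial v (1:ℂ) ∈ a → ∃ k, g k ≤ v)
    (x : Fin n → ℝ) (hx : x ∈ ELS.newt a) :
    ∃ (t : Fin m → ℝ) (s : Fin n → ℝ), (∀ k, 0 ≤ t k) ∧ (∑ k, t k = 1) ∧ (∀ j, 0 ≤ s j) ∧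
      (∀ j, ∑ k, (g k j : ℝ) * t k + s j = x j) := by
  classical
  rw [ELS.newt, mem_convexHull_iff_exists_fintype] at hx
  obtain ⟨ι, hι, w, z, hw0, hw1, hz, hsum⟩ := hx
  choose v hva hvb using hz
  choose h hle using fun i => hdom (v i) (hva i)
  set t : Fin m → ℝ := fun k => ∑ i ∈ Finset.univ.filter (fun i => h i = k), w i with hT
  have ht0 : ∀ k, 0 ≤ t k := fun k => Finset.sum_nonneg fun i _ => hw0 i
  have ht1 : ∑ k, t k = 1 := by
    rw [hT, ← hw1]
    exact Finset.sum_fiberwise _ _ _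
  have hfib : ∀ j : Fin n, ∑ k, (g k j : ℝ) * t k = ∑ i, w i * (g (h i) j : ℝ) := by
    intro j
    rw [hT]
    rw [Finset.sum_congr rfl fun k _ => Finset.mul_sum _ _ _]
    rw [← Finset.sum_fiberwise Finset.univ h (fun i => w i * (g (h i) j : ℝ))]
    refine Finset.sum_congr rfl fun k _ => Finset.sum_congr rfl fun i hi => ?_
    rw [Finset.mem_filter] at hi
    rw [hi.2]
    ring
  have hxj : ∀ j, x j = ∑ i, w i * z i j := by
    intro j
    rw [← hsum, Finset.sum_apply]
    exact Finset.sum_congr rfl fun i _ => rfl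
  set s : Fin n → ℝ := fun j => x j - ∑ k, (g k j : ℝ) * t k with hS
  refine ⟨t, s, ht0, ht1, ?_, fun j => by
    have e0 : s j = x j - ∑ k, ((g k j : ℝ)) * t k := rfl
    rw [e0]; ring⟩
  intro j
  have e0 : s j = x j - ∑ k, ((g k j : ℝ)) * t k := rfl
  rw [e0, hfib j, hxj j, ← Finset.sum_sub_distrib]
  refine Finset.sum_nonneg fun i _ => ?_
  have hz : z i j = ((v i) j : ℝ) := by rw [hvb i]
  rw [hz, ← mul_sub]
  refine mul_nonneg (hw0 i) ?_
  have := hle i j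
  rw [sub_nonneg]
  exact_mod_cast this


variable {n m d : ℕ}

/-! ### dot product helpers -/

def qδ {k : ℕ} (j : Fin k) : Fin k → ℚ := fun j' => if j' = j then 1 else 0

lemma dot_qδ {k : ℕ} (j : Fin k) (x : Fin k → ℝ) : dotR (qδ j) x = x j := by
  unfold dotR qδ
  simp only [apply_ite (fun q : ℚ => (q : ℝ)), Rat.cast_one, Rat.cast_zero, ite_mul, one_mul,
    zero_mul]
  simp

lemma dot_neg {k : ℕ} (a : Fin k → ℚ) (x : Fin k → ℝ) : dotR (-a) x = -dotR a x := by
  unfold dotR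
  rw [← Finset.sum_neg_distrib]
  refine Finset.sum_congr rfl fun i _ => ?_
  rw [Pi.neg_apply]
  push_cast
  ring

lemma dot_zero {k : ℕ} (x : Fin k → ℝ) : dotR 0 x = 0 := by
  unfold dotR; simp

lemma dot_one {k : ℕ} (x : Fin k → ℝ) : dotR (fun _ => (1:ℚ)) x = ∑ i, x i := by
  unfold dotR; simp

lemma dot_split (a : Fin (n + d) → ℚ) (x : Fin n → ℝ) (y : Fin d → ℝ) :
    dotR a (Fin.append x y) = (∑ j, (a (Fin.castAdd d j) : ℝ) * x j)
      + ∑ i, (a (Fin.natAdd n i) : ℝ) * y i := by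
  unfold dotR
  rw [Fin.sum_univ_add]
  congr 1
  · exact Finset.sum_congr rfl fun j _ => by rw [Fin.append_left]
  · exact Finset.sum_congr rfl fun i _ => by rw [Fin.append_right]

lemma dot_append (a : Fin n → ℚ) (b : Fin d → ℚ) (x : Fin n → ℝ) (y : Fin d → ℝ) :
    dotR (Fin.append a b) (Fin.append x y) = dotR a x + dotR b y := by
  rw [dot_split]
  congr 1
  · exact Finset.sum_congr rfl fun j _ => by rw [Fin.append_left]
  · exact Finset.sum_congr rfl fun i _ => by rw [Fin.append_right]

/-! ### the defining system of a Newton polyhedron -/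

def rowEqA (g : Fin m → (Fin n →₀ ℕ)) (j : Fin n) : QRow (n + (m + n)) :=
  (Fin.append (-(qδ j)) (Fin.append (fun k => (g k j : ℚ)) (qδ j)), 0)
def rowEqB (g : Fin m → (Fin n →₀ ℕ)) (j : Fin n) : QRow (n + (m + n)) :=
  (Fin.append (qδ j) (Fin.append (fun k => -(g k j : ℚ)) (-(qδ j))), 0)
def rowSumA (n m : ℕ) : QRow (n + (m + n)) :=
  (Fin.append (0 : Fin n → ℚ) (Fin.append (fun _ : Fin m => (1:ℚ)) (0 : Fin n → ℚ)), 1)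
def rowSumB (n m : ℕ) : QRow (n + (m + n)) :=
  (Fin.append (0 : Fin n → ℚ) (Fin.append (fun _ : Fin m => (-1:ℚ)) (0 : Fin n → ℚ)), -1)
def rowT (n : ℕ) {m : ℕ} (k : Fin m) : QRow (n + (m + n)) :=
  (Fin.append (0 : Fin n → ℚ) (Fin.append (-(qδ k)) (0 : Fin n → ℚ)), 0)
def rowS {n : ℕ} (m : ℕ) (j : Fin n) : QRow (n + (m + n)) :=
  (Fin.append (0 : Fin n → ℚ) (Fin.append (0 : Fin m → ℚ) (-(qδ j))), 0)

def Srep (m : ℕ) (g : Fin m → (Fin n →₀ ℕ)) : Finset (QRow (n + (m + n))) :=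
  {rowSumA n m, rowSumB n m} ∪ Finset.univ.image (rowEqA g) ∪ Finset.univ.image (rowEqB g)
    ∪ Finset.univ.image (rowT n (m := m)) ∪ Finset.univ.image (rowS m)

lemma Srep_sat (g : Fin m → (Fin n →₀ ℕ)) (x : Fin n → ℝ) (t : Fin m → ℝ) (s : Fin n → ℝ) :
    SysSat (Srep m g) (Fin.append x (Fin.append t s)) ↔
      ((∀ k, 0 ≤ t k) ∧ (∑ k, t k = 1) ∧ (∀ j, 0 ≤ s j) ∧
        (∀ j, ∑ k, (g k j : ℝ) * t k + s j = x j)) := by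
  have evalSumA : dotR (rowSumA n m).1 (Fin.append x (Fin.append t s)) = ∑ k, t k := by
    rw [rowSumA, dot_append, dot_append, dot_zero, dot_zero, dot_one]; ring
  have evalSumB : dotR (rowSumB n m).1 (Fin.append x (Fin.append t s)) = -∑ k, t k := by
    rw [rowSumB, dot_append, dot_append, dot_zero, dot_zero]
    rw [show (fun _ : Fin m => (-1:ℚ)) = -(fun _ : Fin m => (1:ℚ)) from rfl, dot_neg, dot_one]
    ring
  have evalT : ∀ k, dotR (rowT n (m := m) k).1 (Fin.append x (Fin.append t s)) = -(t k) := by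
    intro k
    rw [rowT, dot_append, dot_append, dot_zero, dot_zero, dot_neg, dot_qδ]
    ring
  have evalS : ∀ j, dotR (rowS m j).1 (Fin.append x (Fin.append t s)) = -(s j) := by
    intro j
    rw [rowS, dot_append, dot_append, dot_zero, dot_zero, dot_neg, dot_qδ]
    ring
  have evalEqA : ∀ j, dotR (rowEqA g j).1 (Fin.append x (Fin.append t s))
      = -(x j) + (∑ k, (g k j : ℝ) * t k + s j) := by
    intro j
    rw [rowEqA, dot_append, dot_append, dot_neg, dot_qδ, dot_qδ]
    unfold dotR
    push_cast
    ring
  have evalEqB : ∀ j, dotR (rowEqB g j).1 (Fin.append x (Fin.append t s))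
      = x j - (∑ k, (g k j : ℝ) * t k + s j) := by
    intro j
    rw [rowEqB, dot_append, dot_append, dot_qδ, dot_neg, dot_qδ]
    rw [show (fun k => -(g k j : ℚ)) = -(fun k => (g k j : ℚ)) from rfl, dot_neg]
    unfold dotR
    push_cast
    ring
  constructor
  · intro hS
    have memSumA : rowSumA n m ∈ Srep m g := by
      unfold Srep
      refine Finset.mem_union_left _ (Finset.mem_union_left _ (Finset.mem_union_left _
        (Finset.mem_union_left _ ?_)))
      simp
    have memSumB : rowSumB n m ∈ Srep m g := by
      unfold Srep
      refine Finset.mem_union_left _ (Finset.mem_union_left _ (Finset.mem_union_left _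
        (Finset.mem_union_left _ ?_)))
      simp
    have memEqA : ∀ j, rowEqA g j ∈ Srep m g := fun j => by
      unfold Srep
      refine Finset.mem_union_left _ (Finset.mem_union_left _ (Finset.mem_union_left _
        (Finset.mem_union_right _ ?_)))
      exact Finset.mem_image_of_mem _ (Finset.mem_univ j)
    have memEqB : ∀ j, rowEqB g j ∈ Srep m g := fun j => by
      unfold Srep
      refine Finset.mem_union_left _ (Finset.mem_union_left _ (Finset.mem_union_right _ ?_))
      exact Finset.mem_image_of_mem _ (Finset.mem_univ j)
    have memT : ∀ k, rowT n (m := m) k ∈ Srep m g := fun k => by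
      unfold Srep
      refine Finset.mem_union_left _ (Finset.mem_union_right _ ?_)
      exact Finset.mem_image_of_mem _ (Finset.mem_univ k)
    have memS : ∀ j, rowS m j ∈ Srep m g := fun j => by
      unfold Srep
      refine Finset.mem_union_right _ ?_
      exact Finset.mem_image_of_mem _ (Finset.mem_univ j)
    refine ⟨fun k => ?_, ?_, fun j => ?_, fun j => ?_⟩
    · have := hS _ (memT k)
      unfold RowSat at this
      rw [evalT k, show (rowT n (m := m) k).2 = 0 from rfl] at this
      push_cast at this
      linarith
    · have h1 := hS _ memSumA
      have h2 := hS _ memSumB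
      unfold RowSat at h1 h2
      rw [evalSumA, show (rowSumA n m).2 = 1 from rfl] at h1
      rw [evalSumB, show (rowSumB n m).2 = -1 from rfl] at h2
      push_cast at h1 h2
      linarith
    · have := hS _ (memS j)
      unfold RowSat at this
      rw [evalS j, show (rowS (n := n) m j).2 = 0 from rfl] at this
      push_cast at this
      linarith
    · have h1 := hS _ (memEqA j)
      have h2 := hS _ (memEqB j)
      unfold RowSat at h1 h2
      rw [evalEqA j, show (rowEqA g j).2 = 0 from rfl] at h1
      rw [evalEqB j, show (rowEqB g j).2 = 0 from rfl] at h2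
      push_cast at h1 h2
      linarith
  · rintro ⟨ht0, ht1, hs0, heq⟩ r hr
    unfold Srep at hr
    simp only [Finset.mem_union, Finset.mem_insert, Finset.mem_singleton, Finset.mem_image,
      Finset.mem_univ, true_and] at hr
    unfold RowSat
    rcases hr with ((((rfl | rfl) | ⟨j, rfl⟩) | ⟨j, rfl⟩) | ⟨k, rfl⟩) | ⟨j, rfl⟩
    · rw [evalSumA, ht1, show (rowSumA n m).2 = 1 from rfl]; norm_num
    · rw [evalSumB, ht1, show (rowSumB n m).2 = -1 from rfl]; norm_num
    · rw [evalEqA j, heq j, show (rowEqA g j).2 = 0 from rfl]; norm_num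
    · rw [evalEqB j, heq j, show (rowEqB g j).2 = 0 from rfl]; norm_num
    · rw [evalT k, show (rowT n (m := m) k).2 = 0 from rfl]; push_cast; linarith [ht0 k]
    · rw [evalS j, show (rowS (n := n) m j).2 = 0 from rfl]; push_cast; linarith [hs0 j]

lemma append_parts (w : Fin (m + n) → ℝ) :
    w = Fin.append (fun k => w (Fin.castAdd n k)) (fun j => w (Fin.natAdd m j)) := by
  funext i
  refine Fin.addCases ?_ ?_ i
  · intro k; rw [Fin.append_left]
  · intro j; rw [Fin.append_right]

/-- the Newton polyhedron of a monomial ideal is given by a rational linear system. -/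
lemma exists_newt_sys (a : Ideal (MvP n))
    (ha : ∀ f ∈ a, ∀ v ∈ f.support, (monomial v (1 : ℂ)) ∈ a) :
    ∃ S : Finset (QRow n), ∀ x : Fin n → ℝ, SysSat S x ↔ x ∈ ELS.newt a := by
  obtain ⟨m, g, hg, hdom⟩ := exists_gens a ha
  obtain ⟨S, hS⟩ := elim_all (m + n) (Srep m g)
  refine ⟨S, fun x => ?_⟩
  rw [hS]
  constructor
  · rintro ⟨w, hw⟩
    rw [append_parts w] at hw
    rw [Srep_sat] at hw
    obtain ⟨ht0, ht1, hs0, heq⟩ := hw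
    exact mem_newt_of_comb a m g hg _ _ ht0 ht1 hs0 x heq
  · intro hx
    obtain ⟨t, s, ht0, ht1, hs0, heq⟩ := exists_ts a m g hdom x hx
    exact ⟨Fin.append t s, (Srep_sat g x t s).2 ⟨ht0, ht1, hs0, heq⟩⟩

/-! ### substitution of rational values for the first block of variables -/

def substSys (yq : Fin n → ℚ) (S : Finset (QRow (n + d))) : Finset (QRow d) :=
  S.image fun ρ => (fun i => ρ.1 (Fin.natAdd n i), ρ.2 - ∑ j, ρ.1 (Fin.castAdd d j) * yq j)

lemma subst_sat (yq : Fin n → ℚ) (S : Finset (QRow (n + d))) (w : Fin d → ℝ) :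
    SysSat (substSys yq S) w ↔ SysSat S (Fin.append (fun j => ((yq j : ℚ) : ℝ)) w) := by
  have key : ∀ ρ : QRow (n + d),
      (RowSat (fun i => ρ.1 (Fin.natAdd n i), ρ.2 - ∑ j, ρ.1 (Fin.castAdd d j) * yq j) w
        ↔ RowSat ρ (Fin.append (fun j => ((yq j : ℚ) : ℝ)) w)) := by
    intro ρ
    unfold RowSat
    rw [dot_split]
    have e1 : ∑ j, (ρ.1 (Fin.castAdd d j) : ℝ) * ((yq j : ℚ) : ℝ)
        = ((∑ j, ρ.1 (Fin.castAdd d j) * yq j : ℚ) : ℝ) := by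
      push_cast
      rfl
    rw [e1]
    unfold dotR
    push_cast
    constructor <;> intro h <;> linarith
  constructor
  · intro h ρ hρ
    rw [← key ρ]
    exact h _ (Finset.mem_image_of_mem _ hρ)
  · intro h r hr
    obtain ⟨ρ, hρ, rfl⟩ := Finset.mem_image.1 hr
    rw [key ρ]
    exact h ρ hρ

/-! ### integrality: scaling a rational point of the Newton polyhedron -/

lemma rat_scale (r : ℚ) (dd : ℕ) (hdvd : r.den ∣ dd) (hr : 0 ≤ r) :
    ∃ N : ℕ, (N : ℚ) = dd * r := by
  obtain ⟨e, he⟩ := hdvd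
  have hnum : 0 ≤ r.num := Rat.num_nonneg.2 hr
  have hden : ((r.den : ℚ)) ≠ 0 := by
    exact_mod_cast r.den_ne_zero
  have key : (r.num : ℚ) = r * r.den :=
    (div_eq_iff hden).1 (Rat.num_div_den r)
  have h3 : ((r.num.toNat : ℕ) : ℚ) = (r.num : ℚ) := by
    exact_mod_cast congrArg (fun z : ℤ => (z : ℚ)) (Int.toNat_of_nonneg hnum)
  refine ⟨r.num.toNat * e, ?_⟩
  push_cast [he]
  rw [h3, key]
  ring


lemma ratpoint (a : Ideal (MvP n))
    (ha : ∀ f ∈ a, ∀ v ∈ f.support, (monomial v (1 : ℂ)) ∈ a)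
    (y : Fin n → ℝ) (yq : Fin n → ℚ) (hy : ∀ j, y j = (yq j : ℝ))
    (hmem : y ∈ ELS.newt a) :
    ∃ (q : ℕ) (v : Fin n →₀ ℕ), 1 ≤ q ∧ (∀ j, (v j : ℝ) = q * y j) ∧
      monomial v (1:ℂ) ∈ a ^ q := by
  classical
  obtain ⟨m, g, hg, hdom⟩ := exists_gens a ha
  obtain ⟨t0, s0, ht00, ht01, hs00, heq0⟩ := exists_ts a m g hdom y hmem
  have hfeas : SysSat (substSys yq (Srep m g)) (Fin.append t0 s0) := by
    rw [subst_sat]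
    have hyc : (fun j => ((yq j : ℚ) : ℝ)) = y := by funext j; rw [hy j]
    rw [hyc]
    exact (Srep_sat g y t0 s0).2 ⟨ht00, ht01, hs00, heq0⟩
  have hrp := ratpoly _ _ _ hfeas
  have hne : {w : Fin (m+n) → ℝ |
      IsRatVec w ∧ SysSat (substSys yq (Srep m g)) w}.Nonempty := by
    rcases Set.eq_empty_or_nonempty {w : Fin (m+n) → ℝ |
        IsRatVec w ∧ SysSat (substSys yq (Srep m g)) w} with hE | hNE
    · rw [hE, convexHull_empty] at hrp
      exact absurd hrp (Set.notMem_empty _)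
    · exact hNE
  obtain ⟨w, hwrat, hwsat⟩ := hne
  rw [subst_sat, append_parts w] at hwsat
  obtain ⟨ht0, ht1, hs0, heq⟩ := (Srep_sat g _ _ _).1 hwsat
  choose wq hwq using hwrat
  set tq : Fin m → ℚ := fun k => wq (Fin.castAdd n k) with htq
  set sq : Fin n → ℚ := fun j => wq (Fin.natAdd m j) with hsq
  have hwt : ∀ k, w (Fin.castAdd n k) = ((tq k : ℚ) : ℝ) := fun k => hwq _
  have hws : ∀ j, w (Fin.natAdd m j) = ((sq j : ℚ) : ℝ) := fun j => hwq _
  have htq0 : ∀ k, 0 ≤ tq k := by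
    intro k
    have := ht0 k
    rw [hwt k] at this
    exact_mod_cast this
  have hsq0 : ∀ j, 0 ≤ sq j := by
    intro j
    have := hs0 j
    rw [hws j] at this
    exact_mod_cast this
  have htq1 : ∑ k, tq k = 1 := by
    have h1 : ((∑ k, tq k : ℚ) : ℝ) = ((1 : ℚ) : ℝ) := by
      push_cast
      rw [← ht1]
      exact Finset.sum_congr rfl fun k _ => (hwt k).symm
    exact_mod_cast h1
  have heqq : ∀ j, ∑ k, (g k j : ℚ) * tq k + sq j = yq j := by
    intro j
    have h1 := heq j
    rw [hws j] at h1
    have h2 : ∑ k, (g k j : ℝ) * w (Fin.castAdd n k)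
        = ((∑ k, (g k j : ℚ) * tq k : ℚ) : ℝ) := by
      push_cast
      exact Finset.sum_congr rfl fun k _ => by rw [hwt k]
    rw [h2] at h1
    have h3 : ((∑ k, (g k j : ℚ) * tq k + sq j : ℚ) : ℝ) = ((yq j : ℚ) : ℝ) := by
      push_cast
      push_cast at h1
      linarith [h1]
    exact_mod_cast h3
  -- clear denominators
  set q : ℕ := (∏ k, (tq k).den) * ∏ j, (yq j).den with hqdef
  have hq1 : 1 ≤ q := by
    rw [hqdef]
    refine Nat.one_le_iff_ne_zero.2 (Nat.mul_ne_zero ?_ ?_)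
    · exact Finset.prod_ne_zero_iff.2 fun k _ => (tq k).den_ne_zero
    · exact Finset.prod_ne_zero_iff.2 fun j _ => (yq j).den_ne_zero
  have hqQ : (0:ℚ) ≤ q := by positivity
  choose e he using fun k => rat_scale (tq k) q
    (Dvd.dvd.mul_right (Finset.dvd_prod_of_mem _ (Finset.mem_univ k)) _) (htq0 k)
  have hyq0 : ∀ j, 0 ≤ yq j := by
    intro j
    rw [← heqq j]
    refine add_nonneg (Finset.sum_nonneg fun k _ => mul_nonneg (by positivity) (htq0 k)) (hsq0 j)
  choose yv hyv using fun j => rat_scale (yq j) q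
    (dvd_mul_of_dvd_right (Finset.dvd_prod_of_mem _ (Finset.mem_univ j)) _) (hyq0 j)
  have hsume : ∑ k, e k = q := by
    have h1 : ((∑ k, e k : ℕ) : ℚ) = ((q : ℕ) : ℚ) := by
      push_cast
      rw [Finset.sum_congr rfl fun k _ => he k, ← Finset.mul_sum, htq1, mul_one]
    exact_mod_cast h1
  have hcast : ∀ j : Fin n, ∑ k, e k * (g k j) ≤ yv j := by
    intro j
    have h1 : ((∑ k, e k * (g k j) : ℕ) : ℚ) ≤ ((yv j : ℕ) : ℚ) := by
      push_cast
      rw [Finset.sum_congr rfl fun k _ => by rw [he k]]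
      have h2 : ∑ k, (q:ℚ) * tq k * ((g k j : ℕ) : ℚ) = (q:ℚ) * ∑ k, (g k j : ℚ) * tq k := by
        rw [Finset.mul_sum]
        exact Finset.sum_congr rfl fun k _ => by push_cast; ring
      rw [h2, hyv j]
      have h3 := heqq j
      have h4 := hsq0 j
      nlinarith [hqQ]
    exact_mod_cast h1
  set sv : Fin n → ℕ := fun j => yv j - ∑ k, e k * (g k j) with hsv
  set v : Fin n →₀ ℕ := Finsupp.equivFunOnFinite.symm sv + ∑ k, e k • g k with hv
  have hvj : ∀ j, v j = yv j := by
    intro j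
    rw [hv]
    simp only [Finsupp.add_apply, Finsupp.coe_equivFunOnFinite_symm,
      Finsupp.coe_finset_sum, Finset.sum_apply, Finsupp.smul_apply, smul_eq_mul]
    rw [hsv]
    exact Nat.sub_add_cancel (hcast j)
  refine ⟨q, v, hq1, ?_, ?_⟩
  · intro j
    rw [hvj j, hy j]
    have h1 : ((yv j : ℕ) : ℝ) = ((q : ℕ) : ℝ) * ((yq j : ℚ) : ℝ) := by
      have h2 := congrArg (fun r : ℚ => (r : ℝ)) (hyv j)
      push_cast at h2 ⊢
      linarith [h2]
    exact h1
  · rw [← hsume]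
    exact comb_monomial_mem a m g e hg _


end Stmt7Aux

open Stmt7Aux Finset

/-- for the graded system `I_p = C_1^p ∩ … ∩ C_r^p` of monomial ideals,
`⋃_{p≥1} (1/p)·Newt(I_p) = Newt(C_1) ∩ … ∩ Newt(C_r)`. -/
theorem stmt7 {n r : ℕ} (hr : 1 ≤ r) (C : Fin r → Ideal (MvPolynomial (Fin n) ℂ))
    (hne : ∀ i, C i ≠ ⊥) (hmono : ∀ i, ELS.IsMonomialIdeal (C i)) :
    (⋃ p : ℕ, ⋃ _ : 1 ≤ p, ((p : ℝ)⁻¹) • ELS.newt (⨅ i, (C i) ^ p)) = ⋂ i, ELS.newt (C i) := by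
  classical
  apply Set.Subset.antisymm
  · -- easy inclusion
    intro x hx
    simp only [Set.mem_iUnion] at hx
    obtain ⟨p, hp, hx⟩ := hx
    refine Set.mem_iInter.2 fun i => ?_
    obtain ⟨y, hy, rfl⟩ := hx
    have h1 : y ∈ ELS.newt ((C i) ^ p) := newt_mono (iInf_le _ i) hy
    obtain ⟨z, hz, rfl⟩ := newt_pow_subset (C i) (hmono i) p hp h1
    have hp0 : ((p:ℝ)) ≠ 0 := by
      have : (0:ℝ) < p := by exact_mod_cast hp
      exact this.ne'
    show (p:ℝ)⁻¹ • ((p:ℝ) • z) ∈ ELS.newt (C i)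
    rw [smul_smul, inv_mul_cancel₀ hp0, one_smul]
    exact hz
  · -- hard inclusion
    intro x hx
    rw [Set.mem_iInter] at hx
    choose Ssys hSsys using fun i : Fin r => exists_newt_sys (C i) (hmono i)
    set Shat : Finset (QRow n) := Finset.univ.biUnion Ssys with hShat
    have hx2 : SysSat Shat x := by
      intro ρ hρ
      obtain ⟨i, _, hi⟩ := Finset.mem_biUnion.1 hρ
      exact (hSsys i x).2 (hx i) ρ hi
    have hrp := ratpoly n Shat x hx2
    rw [mem_convexHull_iff_exists_fintype] at hrp
    obtain ⟨ι, hι, wt, z, hw0, hw1, hzT, hsum⟩ := hrp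
    have hz2 : ∀ k : ι, ∃ (Q : ℕ) (v : Fin n →₀ ℕ), 1 ≤ Q ∧ (∀ j, (v j : ℝ) = Q * z k j) ∧
        monomial v (1:ℂ) ∈ ⨅ i, (C i) ^ Q := by
      intro k
      obtain ⟨hrat, hsat⟩ := hzT k
      choose zq hzq using hrat
      have hmemi : ∀ i : Fin r, z k ∈ ELS.newt (C i) := by
        intro i
        refine (hSsys i (z k)).1 fun ρ hρ => hsat ρ ?_
        exact Finset.mem_biUnion.2 ⟨i, Finset.mem_univ i, hρ⟩
      choose qi vi hqi1 hvi hmemvi using fun i : Fin r =>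
        ratpoint (C i) (hmono i) (z k) zq hzq (hmemi i)
      set Q : ℕ := ∏ i, qi i with hQdef
      have hQ1 : 1 ≤ Q := Finset.one_le_prod' fun i _ => hqi1 i
      have hdvd : ∀ i, qi i ∣ Q := fun i => Finset.dvd_prod_of_mem _ (Finset.mem_univ i)
      set c : Fin r → ℕ := fun i => Q / qi i with hcdef
      have hc : ∀ i, qi i * c i = Q := fun i => Nat.mul_div_cancel' (hdvd i)
      have hQall : ∀ (i : Fin r) (j : Fin n), (((c i • vi i) j : ℕ) : ℝ) = Q * z k j := by
        intro i j
        rw [Finsupp.smul_apply, smul_eq_mul]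
        push_cast
        rw [hvi i j]
        have hcc : ((qi i : ℕ) : ℝ) * ((c i : ℕ) : ℝ) = ((Q : ℕ) : ℝ) := by
          exact_mod_cast congrArg (fun t : ℕ => (t : ℝ)) (hc i)
        rw [← hcc]
        ring
      have hi0 : Nonempty (Fin r) := ⟨⟨0, hr⟩⟩
      obtain ⟨i0⟩ := hi0
      refine ⟨Q, c i0 • vi i0, hQ1, fun j => hQall i0 j, ?_⟩
      rw [Submodule.mem_iInf]
      intro i
      have hveq : c i0 • vi i0 = c i • vi i := by
        ext j
        have h1 := hQall i0 j
        have h2 := hQall i j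
        have h3 : (((c i0 • vi i0) j : ℕ) : ℝ) = (((c i • vi i) j : ℕ) : ℝ) := by rw [h1, h2]
        exact_mod_cast h3
      rw [hveq]
      have hpow : monomial (c i • vi i) (1:ℂ) = (monomial (vi i) (1:ℂ)) ^ (c i) := by
        rw [monomial_pow, one_pow]
      rw [hpow, ← hc i, pow_mul]
      exact Ideal.pow_mem_pow (hmemvi i) _
    choose Qk vk hQk1 hvk hmemk using hz2
    set Q : ℕ := ∏ k, Qk k with hQdef
    have hQ1 : 1 ≤ Q := Finset.one_le_prod' fun k _ => hQk1 k
    have hpt : ∀ k, (Q : ℝ) • z k ∈ ELS.monomSet (⨅ i, (C i) ^ Q) := by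
      intro k
      have hdvd : Qk k ∣ Q := Finset.dvd_prod_of_mem _ (Finset.mem_univ k)
      set ck : ℕ := Q / Qk k with hckdef
      have hc : Qk k * ck = Q := Nat.mul_div_cancel' hdvd
      refine ⟨ck • vk k, ?_, ?_⟩
      · have hpow : monomial (ck • vk k) (1:ℂ) = (monomial (vk k) (1:ℂ)) ^ ck := by
          rw [monomial_pow, one_pow]
        rw [hpow, Submodule.mem_iInf]
        intro i
        have h1 : monomial (vk k) (1:ℂ) ∈ (C i) ^ (Qk k) := (Submodule.mem_iInf _).1 (hmemk k) i
        have h2 := Ideal.pow_mem_pow h1 ck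
        rw [← pow_mul, hc] at h2
        exact h2
      · funext j
        rw [Pi.smul_apply, smul_eq_mul, Finsupp.smul_apply, smul_eq_mul]
        push_cast
        rw [hvk k j]
        have hcc : ((Qk k : ℕ) : ℝ) * ((ck : ℕ) : ℝ) = ((Q : ℕ) : ℝ) := by
          exact_mod_cast congrArg (fun t : ℕ => (t : ℝ)) hc
        rw [← hcc]
        ring
    have hQx : (Q:ℝ) • x ∈ ELS.newt (⨅ i, (C i) ^ Q) := by
      have he : (Q:ℝ) • x = ∑ k, wt k • ((Q:ℝ) • z k) := by
        rw [← hsum, Finset.smul_sum]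
        exact Finset.sum_congr rfl fun k _ => smul_comm _ _ _
      rw [he]
      exact (convex_convexHull ℝ _).sum_mem (fun k _ => hw0 k) (by rw [hw1])
        fun k _ => subset_convexHull ℝ _ (hpt k)
    refine Set.mem_iUnion.2 ⟨Q, Set.mem_iUnion.2 ⟨hQ1, ?_⟩⟩
    refine ⟨(Q:ℝ) • x, hQx, ?_⟩
    have hQ0 : ((Q:ℝ)) ≠ 0 := by
      have : (0:ℝ) < Q := by exact_mod_cast hQ1
      exact this.ne'
    show (Q:ℝ)⁻¹ • ((Q:ℝ) • x) = x
    rw [smul_smul, inv_mul_cancel₀ hQ0, one_smul]
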